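/- arXiv:2504.04018 — 2 statements merged into one kernel-verified Lean document; each statement's English description precedes it below -/
import Mathlib

section
/- Consider a perfect binary segment tree over [1, N] with N = 2^L: the nodes at depth j are the ranges [(t-1)·N/2^j + 1, t·N/2^j] for t = 1, ..., 2^j, for j = 0, ..., L. For any query range [l_q, r_q] ⊆ [1, N], there exists a tree node [a, b] containing [l_q, r_q] with (r_q - l_q + 1)/(b - a + 1) ≥ 1/2, OR there exists a depth j and boundary point m (a midpoint of some node at depth j) such that [l_q, r_q] splits into [l_q, m] and [m+1, r_q], each of which is contained in a child node [a, b] at depth j+1 with elastic factor at least 1/2; i.e., at most two tree-node graphs suffice. -/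
/-- `IsSegNode L a b`: `[a, b]` is a node of the perfect binary segment tree over `[1, 2^L]`,
i.e. `[a,b] = [(t-1)·2^(L-j)+1, t·2^(L-j)]` for some depth `j ≤ L` and `1 ≤ t ≤ 2^j`. -/
def IsSegNode (L a b : ℕ) : Prop :=
  ∃ j t, j ≤ L ∧ 1 ≤ t ∧ t ≤ 2 ^ j ∧ a = (t - 1) * 2 ^ (L - j) + 1 ∧ b = t * 2 ^ (L - j)

/-- Minimal power of two at least `s`, below a given bound, is at most `2*s`. -/
lemma exists_min_pow {s k : ℕ} (hs : 1 ≤ s) (h : s ≤ 2 ^ k) :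
    ∃ k', k' ≤ k ∧ s ≤ 2 ^ k' ∧ 2 ^ k' ≤ 2 * s := by
  have hex : ∃ i, s ≤ 2 ^ i := ⟨k, h⟩
  refine ⟨Nat.find hex, Nat.find_min' hex h, Nat.find_spec hex, ?_⟩
  rcases Nat.eq_zero_or_pos (Nat.find hex) with h0 | h0
  · rw [h0]; omega
  · have h2 : ¬ (s ≤ 2 ^ (Nat.find hex - 1)) := Nat.find_min hex (by omega)
    have h3 : 2 ^ Nat.find hex = 2 * 2 ^ (Nat.find hex - 1) := by
      rw [← pow_succ']; congr 1; omega
    omega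

/-- A range `[x, m]` whose right endpoint `m` is divisible by `2^k` is coverable. -/
lemma suffix_cover (L x m k : ℕ) (hx : 1 ≤ x) (hxm : x ≤ m) (hm : m ≤ 2 ^ L)
    (hdvd : 2 ^ k ∣ m) (hlen : m - x + 1 ≤ 2 ^ k) :
    ∃ a b, IsSegNode L a b ∧ a ≤ x ∧ m ≤ b ∧ b - a + 1 ≤ 2 * (m - x + 1) := by
  obtain ⟨k', hk'k, h1, hmin⟩ := exists_min_pow (s := m - x + 1) (by omega) hlen
  have hdvd' : 2 ^ k' ∣ m := (pow_dvd_pow 2 hk'k).trans hdvd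
  have hple : 2 ^ k' ≤ m := Nat.le_of_dvd (by omega) hdvd'
  have hkL : k' ≤ L := (Nat.pow_le_pow_iff_right (by norm_num)).mp (hple.trans hm)
  have hLL : L - (L - k') = k' := by omega
  refine ⟨m - 2 ^ k' + 1, m, ⟨L - k', m / 2 ^ k', Nat.sub_le _ _, ?_, ?_, ?_, ?_⟩, by omega,
    le_rfl, by omega⟩
  · exact (Nat.one_le_div_iff (by positivity)).mpr hple
  · calc m / 2 ^ k' ≤ 2 ^ L / 2 ^ k' := Nat.div_le_div_right hm
      _ = 2 ^ (L - k') := Nat.pow_div hkL (by norm_num)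
  · rw [hLL]
    have h4 : (m / 2 ^ k' - 1) * 2 ^ k' = m - 2 ^ k' := by
      rw [Nat.sub_mul, Nat.div_mul_cancel hdvd']; simp
    rw [h4]
  · rw [hLL, Nat.div_mul_cancel hdvd']

/-- A range `[m+1, r]` whose left boundary `m` is divisible by `2^k` with `r - m ≤ 2^k`
is contained in a seg node with elastic factor ≥ 1/2. -/
lemma prefix_cover (L m r k : ℕ) (hm1 : 1 ≤ m) (hmr : m < r) (hr : r ≤ 2 ^ L)
    (hdvd : 2 ^ k ∣ m) (hlen : r - m ≤ 2 ^ k) :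
    ∃ a b, IsSegNode L a b ∧ a ≤ m + 1 ∧ r ≤ b ∧ b - a + 1 ≤ 2 * (r - m) := by
  obtain ⟨k', hk'k, h1, hmin⟩ := exists_min_pow (s := r - m) (by omega) hlen
  have hdvd' : 2 ^ k' ∣ m := (pow_dvd_pow 2 hk'k).trans hdvd
  have hple : 2 ^ k' ≤ m := Nat.le_of_dvd (by omega) hdvd'
  have hkL : k' ≤ L := (Nat.pow_le_pow_iff_right (by norm_num)).mp (hple.trans (by omega))
  have hLL : L - (L - k') = k' := by omega
  have htq : m / 2 ^ k' < 2 ^ (L - k') := by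
    obtain ⟨q, hq⟩ := hdvd'
    have hqlt : q < 2 ^ (L - k') := by
      by_contra hcon
      push_neg at hcon
      have : 2 ^ (L - k') * 2 ^ k' ≤ 2 ^ k' * q := by
        rw [mul_comm (2 ^ (L - k'))]
        exact Nat.mul_le_mul_left _ hcon
      rw [← pow_add] at this
      have hLe : L - k' + k' = L := by omega
      rw [hLe] at this
      omega
    rw [hq, Nat.mul_div_cancel_left _ (by positivity)]
    exact hqlt
  refine ⟨m + 1, m + 2 ^ k', ⟨L - k', m / 2 ^ k' + 1, Nat.sub_le _ _, Nat.le_add_left 1 _, htq, ?_, ?_⟩,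
    le_rfl, by omega, by omega⟩
  · rw [hLL]; simp [Nat.div_mul_cancel hdvd']
  · rw [hLL, add_mul, one_mul, Nat.div_mul_cancel hdvd']

lemma seg_aux (L l r : ℕ) (hl : 1 ≤ l) (hlr : l ≤ r) :
    ∀ n j t, j + n = L → 1 ≤ t → t ≤ 2 ^ j → (t - 1) * 2 ^ n + 1 ≤ l → r ≤ t * 2 ^ n →
    ((∃ a b, IsSegNode L a b ∧ a ≤ l ∧ r ≤ b ∧ b - a + 1 ≤ 2 * (r - l + 1)) ∨
    (∃ j t m, j < L ∧ 1 ≤ t ∧ t ≤ 2 ^ j ∧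
      m = (t - 1) * 2 ^ (L - j) + 2 ^ (L - j - 1) ∧ l ≤ m ∧ m < r ∧
      (∃ a b, IsSegNode L a b ∧ a ≤ l ∧ m ≤ b ∧ b - a + 1 ≤ 2 * (m - l + 1)) ∧
      (∃ a b, IsSegNode L a b ∧ a ≤ m + 1 ∧ r ≤ b ∧ b - a + 1 ≤ 2 * (r - m)))) := by
  intro n
  induction n with
  | zero =>
    intro j t hjn ht1 ht2 ha hb
    simp only [pow_zero, mul_one] at ha hb
    left
    exact ⟨t, t, ⟨j, t, by omega, ht1, ht2, by simp [show L - j = 0 by omega]; omega,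
      by simp [show L - j = 0 by omega]⟩, by omega, hb, by omega⟩
  | succ n ih =>
    intro j t hjn ht1 ht2 ha hb
    obtain ⟨s, rfl⟩ : ∃ s, t = s + 1 := ⟨t - 1, by omega⟩
    simp only [Nat.add_sub_cancel] at ha
    set A := s * 2 ^ (n + 1) with hA
    have hpow : 2 ^ (n + 1) = 2 ^ n + 2 ^ n := by rw [pow_succ]; ring
    have hs1 : (s + 1) * 2 ^ (n + 1) = A + 2 ^ (n + 1) := by rw [hA]; ring
    rw [hs1] at hb
    by_cases hc1 : r ≤ A + 2 ^ n
    · -- descend to left child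
      apply ih (j + 1) (2 * s + 1) (by omega) (by omega)
      · have : 2 ^ (j + 1) = 2 * 2 ^ j := by rw [pow_succ]; ring
        omega
      · have h5 : (2 * s + 1 - 1) * 2 ^ n = A := by
          rw [show 2 * s + 1 - 1 = 2 * s from rfl, hA, pow_succ]; ring
        omega
      · have h6 : (2 * s + 1) * 2 ^ n = A + 2 ^ n := by rw [hA, pow_succ]; ring
        omega
    · by_cases hc2 : A + 2 ^ n + 1 ≤ l
      · -- descend to right child
        apply ih (j + 1) (2 * s + 2) (by omega) (by omega)
        · have : 2 ^ (j + 1) = 2 * 2 ^ j := by rw [pow_succ]; ring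
          omega
        · have h5 : (2 * s + 2 - 1) * 2 ^ n = A + 2 ^ n := by
            rw [show 2 * s + 2 - 1 = 2 * s + 1 from rfl, hA, pow_succ]; ring
          omega
        · have h6 : (2 * s + 2) * 2 ^ n = A + 2 ^ (n + 1) := by rw [hA, pow_succ]; ring
          omega
      · -- split at the midpoint m = A + 2^n
        push_neg at hc1 hc2
        right
        have h2L : 2 ^ j * 2 ^ (n + 1) = 2 ^ L := by rw [← pow_add, show j + (n + 1) = L by omega]
        have hs2 : (s + 1) * 2 ^ (n + 1) ≤ 2 ^ j * 2 ^ (n + 1) :=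
          Nat.mul_le_mul_right _ ht2
        rw [hs1, h2L] at hs2
        have hdvd : 2 ^ n ∣ A + 2 ^ n := ⟨2 * s + 1, by rw [hA, pow_succ]; ring⟩
        refine ⟨j, s + 1, A + 2 ^ n, by omega, by omega, ht2, ?_, by omega, by omega, ?_, ?_⟩
        · rw [show L - j = n + 1 by omega, hA]; norm_num
        · exact suffix_cover L l (A + 2 ^ n) n hl (by omega) (by omega) hdvd (by omega)
        · exact prefix_cover L (A + 2 ^ n) r n (by omega) (by omega) (by omega) hdvd (by omega)

/-- Two-cover lemma for the binary segment tree over `[1, N]`, `N = 2^L`: every query range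
`[l, r] ⊆ [1, N]` either is contained in a tree node `[a,b]` with elastic factor
`(r-l+1)/(b-a+1) ≥ 1/2`, or it splits at the midpoint `m` of some node at depth `j < L` into
`[l, m]` and `[m+1, r]`, each contained in a tree node with elastic factor `≥ 1/2`;
i.e. at most two tree-node graphs suffice. -/
theorem segment_tree_two_cover (L l r : ℕ) (hl : 1 ≤ l) (hlr : l ≤ r) (hr : r ≤ 2 ^ L) :
    (∃ a b, IsSegNode L a b ∧ a ≤ l ∧ r ≤ b ∧ b - a + 1 ≤ 2 * (r - l + 1)) ∨
    (∃ j t m, j < L ∧ 1 ≤ t ∧ t ≤ 2 ^ j ∧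
      m = (t - 1) * 2 ^ (L - j) + 2 ^ (L - j - 1) ∧ l ≤ m ∧ m < r ∧
      (∃ a b, IsSegNode L a b ∧ a ≤ l ∧ m ≤ b ∧ b - a + 1 ≤ 2 * (m - l + 1)) ∧
      (∃ a b, IsSegNode L a b ∧ a ≤ m + 1 ∧ r ≤ b ∧ b - a + 1 ≤ 2 * (r - m))) := by
  exact seg_aux L l r hl hlr L 0 1 (by omega) le_rfl (by norm_num) (by simpa) (by simpa using hr)
end

section
/- Fanout-f dichotomy: in the fanout-f segment tree over [1, N] = [1, f^L], any query range [l_q, r_q] either (a) has elastic factor ≥ 1/f relative to its deepest containing tree node, or (b) intersects exactly two children of its deepest containing node, splitting into a suffix of the left child and a prefix of the right child. -/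
/-- Fanout-`f` dichotomy: in the fanout-`f` segment tree over `[1, f^L]`, let `[a, b]` be the
deepest tree node containing the query range `[l, r]` (depth `j`, block `t`, child length
`w = f^(L-j-1)`).  Then either the elastic factor of the query relative to this node is at
least `1/f` (`f·(r-l+1) ≥ f^(L-j)`), or the query intersects exactly two consecutive children
`s` and `s+1`, splitting into a suffix of the left child and a prefix of the right child. -/
theorem fanout_dichotomy (L f j t l r a w : ℕ) (hf : 2 ≤ f)
    (hjL : j ≤ L) (ht1 : 1 ≤ t) (ht2 : t ≤ f ^ j)
    (ha : a = (t - 1) * f ^ (L - j) + 1) (hw : w = f ^ (L - j - 1))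
    (hal : a ≤ l) (hlr : l ≤ r) (hrb : r ≤ t * f ^ (L - j))
    (hdeep : ∀ j' t', 1 ≤ t' → t' ≤ f ^ j' → j' ≤ L →
      (t' - 1) * f ^ (L - j') + 1 ≤ l → r ≤ t' * f ^ (L - j') → j' ≤ j) :
    f ^ (L - j) ≤ f * (r - l + 1) ∨
    (j < L ∧ ∃ s, 1 ≤ s ∧ s < f ∧
      a + (s - 1) * w ≤ l ∧ l ≤ a + s * w - 1 ∧
      a + s * w ≤ r ∧ r ≤ a + (s + 1) * w - 1) := by
  by_cases hjlt : j < L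
  swap
  · left
    have hLj : L - j = 0 := by omega
    rw [hLj, pow_zero]
    exact Nat.mul_pos (by omega) (by omega)
  have hwpos : 0 < w := by
    rw [hw]; exact pow_pos (by omega) _
  have hM : f ^ (L - j) = f * w := by
    rw [hw, ← pow_succ']
    congr 1
    omega
  obtain ⟨t', rfl⟩ : ∃ t', t = t' + 1 := ⟨t - 1, by omega⟩
  simp only [Nat.add_sub_cancel] at ha
  rw [hM] at ha hrb
  rw [add_mul, one_mul] at hrb
  obtain ⟨q, hqdef⟩ : ∃ q, (l - a) / w = q := ⟨_, rfl⟩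
  obtain ⟨p, hpdef⟩ : ∃ p, (r - a) / w = p := ⟨_, rfl⟩
  have hq1 : q * w ≤ l - a := hqdef ▸ Nat.div_mul_le_self _ _
  have hq2 : l - a < q * w + w := by
    have h1 := Nat.div_add_mod (l - a) w
    have h2 := Nat.mod_lt (l - a) hwpos
    rw [hqdef] at h1
    have h3 : w * q = q * w := Nat.mul_comm _ _
    omega
  have hp1 : p * w ≤ r - a := hpdef ▸ Nat.div_mul_le_self _ _
  have hp2 : r - a < p * w + w := by
    have h1 := Nat.div_add_mod (r - a) w
    have h2 := Nat.mod_lt (r - a) hwpos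
    rw [hpdef] at h1
    have h3 : w * p = p * w := Nat.mul_comm _ _
    omega
  have hqp : q ≤ p := by
    rw [← hqdef, ← hpdef]; exact Nat.div_le_div_right (by omega)
  -- abstract nonlinear atoms
  obtain ⟨X, hX⟩ : ∃ X, t' * (f * w) = X := ⟨_, rfl⟩
  obtain ⟨Q, hQ⟩ : ∃ Q, q * w = Q := ⟨_, rfl⟩
  obtain ⟨P, hP⟩ : ∃ P, p * w = P := ⟨_, rfl⟩
  rw [hX] at ha hrb
  rw [hQ] at hq1 hq2
  rw [hP] at hp1 hp2
  -- p < f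
  have hpf : p < f := by
    have hPfw : P < f * w := by omega
    have : p * w < f * w := by rw [hP]; exact hPfw
    exact Nat.lt_of_mul_lt_mul_right this
  -- q ≠ p, by deepest-node minimality
  have hne : q ≠ p := by
    intro heq
    have hPQ : P = Q := by rw [← hP, ← hQ, heq]
    have hwe : f ^ (L - (j + 1)) = w := by rw [hw, Nat.sub_sub]
    have h2 : t' * f + q + 1 ≤ f ^ (j + 1) := by
      have hq' : q + 1 ≤ f := by omega
      have h3 : (t' + 1) * f ≤ f ^ j * f := Nat.mul_le_mul ht2 (le_refl f)
      have h4 : f ^ (j + 1) = f ^ j * f := pow_succ f j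
      have h5 : (t' + 1) * f = t' * f + f := by ring
      omega
    have hlow : (t' * f + q + 1 - 1) * f ^ (L - (j + 1)) + 1 ≤ l := by
      rw [hwe]
      simp only [Nat.add_sub_cancel]
      have he : (t' * f + q) * w = t' * (f * w) + q * w := by ring
      rw [hX, hQ] at he
      rw [he]
      omega
    have hup : r ≤ (t' * f + q + 1) * f ^ (L - (j + 1)) := by
      rw [hwe]
      have he : (t' * f + q + 1) * w = t' * (f * w) + q * w + w := by ring
      rw [hX, hQ] at he
      rw [he]
      omega
    have := hdeep (j + 1) (t' * f + q + 1) (Nat.le_add_left 1 _) h2 (by omega) hlow hup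
    omega
  by_cases hsplit : p = q + 1
  · -- two-children case
    right
    refine ⟨hjlt, q + 1, by omega, by omega, ?_, ?_, ?_, ?_⟩
    · simp only [Nat.add_sub_cancel]
      rw [hQ]; omega
    · have he : (q + 1) * w = q * w + w := by ring
      rw [hQ] at he; rw [he]; omega
    · have he : (q + 1) * w = q * w + w := by ring
      rw [hQ] at he; rw [he]
      have hPQ : P = Q + w := by
        rw [← hP, ← hQ, hsplit]; ring
      omega
    · have he : (q + 1 + 1) * w = q * w + w + w := by ring
      rw [hQ] at he; rw [he]
      have hPQ : P = Q + w := by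
        rw [← hP, ← hQ, hsplit]; ring
      omega
  · -- big elastic factor case
    left
    rw [hM]
    have hge : q + 2 ≤ p := by omega
    have hPQ : Q + 2 * w ≤ P := by
      have h := Nat.mul_le_mul_right w hge
      have he : (q + 2) * w = q * w + 2 * w := by ring
      rw [he, hQ] at h
      rw [← hP]
      exact h
    have hwle : w ≤ r - l + 1 := by omega
    exact Nat.mul_le_mul_left f hwle
end
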